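/- Let 𝔉 be a Fitting formation, let G be a finite group and let H/K be a chief factor of G such that the group H/K does not belong to 𝔉. Then the 𝔉-radical G_𝔉 of G centralizes H/K, i.e. G_𝔉 ≤ C_G(H/K); indeed HG_𝔉/K is the internal direct product of H/K and G_𝔉K/K. -/

import Mathlib

open scoped commutatorElement

/-- A class of groups: a property of a carrier type together with a group structure on it. -/
def GroupClass : Type 1 :=
  ∀ (G : Type), Group G → Prop

/-- `𝔛.In G` means that the group `G` belongs to the class of groups `𝔛`. -/
def GroupClass.In (𝔛 : GroupClass) (G : Type) [inst : Group G] : Prop :=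
  𝔛 G inst

/-- A class of groups is closed under isomorphism. -/
def GroupClass.IsoClosed (𝔛 : GroupClass) : Prop :=
  ∀ (G : Type) [Group G] (H : Type) [Group H], Nonempty (G ≃* H) → 𝔛.In G → 𝔛.In H

/-- A class of groups is non-empty if some (finite) group belongs to it. -/
def GroupClass.IsNonempty (𝔛 : GroupClass) : Prop :=
  ∃ (X : Type) (inst : Group X), Finite X ∧ 𝔛 X inst

/-- A formation (of finite groups): a class of groups closed under isomorphism,
taking quotients and subdirect products. -/
def IsFormation (𝔉 : GroupClass) : Prop :=
  𝔉.IsoClosed ∧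
  (∀ (G : Type) [Group G] [Finite G] (N : Subgroup G) [N.Normal],
      𝔉.In G → 𝔉.In (G ⧸ N)) ∧
  (∀ (G : Type) [Group G] [Finite G] (N₁ N₂ : Subgroup G) [N₁.Normal] [N₂.Normal],
      𝔉.In (G ⧸ N₁) → 𝔉.In (G ⧸ N₂) → 𝔉.In (G ⧸ (N₁ ⊓ N₂)))

/-- A Fitting class (of finite groups): a class of groups closed under isomorphism,
closed under taking normal subgroups, and closed under products of two normal subgroups
(for normal subgroups `N₁, N₂` the product `N₁N₂` is the join `N₁ ⊔ N₂`). -/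
def IsFittingClass (𝔛 : GroupClass) : Prop :=
  𝔛.IsoClosed ∧
  (∀ (G : Type) [Group G] [Finite G] (N : Subgroup G), N.Normal → 𝔛.In G → 𝔛.In ↥N) ∧
  (∀ (G : Type) [Group G] [Finite G] (N₁ N₂ : Subgroup G), N₁.Normal → N₂.Normal →
      𝔛.In ↥N₁ → 𝔛.In ↥N₂ → 𝔛.In ↥(N₁ ⊔ N₂))

/-- A Fitting formation: both a formation and a Fitting class. -/
def IsFittingFormation (𝔉 : GroupClass) : Prop :=
  IsFormation 𝔉 ∧ IsFittingClass 𝔉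

/-- The centralizer `C_G(H/K) = {g ∈ G ∣ [g,h] ∈ K for all h ∈ H}` of a section `H/K`,
where `K` is a normal subgroup of `G`. -/
def sectionCentralizer {G : Type} [Group G] (H K : Subgroup G) [hK : K.Normal] :
    Subgroup G where
  carrier := {g | ∀ h ∈ H, ⁅g, h⁆ ∈ K}
  one_mem' := by
    intro h _
    have e : ⁅(1 : G), h⁆ = 1 := by group
    rw [e]; exact K.one_mem
  mul_mem' := by
    intro a b ha hb h hh
    have e : ⁅a * b, h⁆ = (a * ⁅b, h⁆ * a⁻¹) * ⁅a, h⁆ := by group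
    rw [e]; exact mul_mem (hK.conj_mem _ (hb h hh) a) (ha h hh)
  inv_mem' := by
    intro a ha h hh
    have e : ⁅a⁻¹, h⁆ = a⁻¹ * ⁅a, h⁆⁻¹ * (a⁻¹)⁻¹ := by group
    rw [e]; exact hK.conj_mem _ (inv_mem (ha h hh)) a⁻¹

theorem mem_sectionCentralizer_iff {G : Type} [Group G] {H K : Subgroup G} [K.Normal]
    {g : G} : g ∈ sectionCentralizer H K ↔ ∀ h ∈ H, ⁅g, h⁆ ∈ K := Iff.rfl

/-- The centralizer of a section `H/K` with `H, K` normal in `G` is normal in `G`. -/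
theorem sectionCentralizer_normal {G : Type} [Group G] (H K : Subgroup G)
    [hH : H.Normal] [hK : K.Normal] : (sectionCentralizer H K).Normal := by
  constructor
  intro x hx g h hh
  have e : ⁅g * x * g⁻¹, h⁆ = g * ⁅x, g⁻¹ * h * (g⁻¹)⁻¹⁆ * g⁻¹ := by group
  rw [e]
  exact hK.conj_mem _ (hx _ (hH.conj_mem h hh g⁻¹)) g

/-- `𝔛.InSect H K` means that the section `H/K` (a group, since `K` is normal)
belongs to the class `𝔛`. -/
def GroupClass.InSect (𝔛 : GroupClass) {G : Type} [Group G] (H K : Subgroup G)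
    [K.Normal] : Prop :=
  𝔛.In (↥H ⧸ K.subgroupOf H)

/-- `H/K` is a chief factor of `G`: both are normal in `G`, `K < H`, and there is no
normal subgroup of `G` strictly between `K` and `H`. -/
def IsChiefFactor {G : Type} [Group G] (H K : Subgroup G) [H.Normal] [K.Normal] : Prop :=
  K < H ∧ ∀ L : Subgroup G, L.Normal → K ≤ L → L ≤ H → L = K ∨ L = H

/-- `R` is the `𝔛`-radical of `G`: the largest normal subgroup of `G` belonging to `𝔛`. -/
def GroupClass.IsRadical (𝔛 : GroupClass) {G : Type} [Group G] (R : Subgroup G) : Prop :=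
  R.Normal ∧ 𝔛.In ↥R ∧ ∀ N : Subgroup G, N.Normal → 𝔛.In ↥N → N ≤ R

/-- A Baer function: an assignment of a class of groups to every group (thought of as
defined on simple groups and extended to their direct powers); the conditions of being
a genuine Baer function are stated in `IsBaerFunction`. -/
def BaerFunction : Type 1 :=
  ∀ (J : Type), Group J → GroupClass

/-- The value of a Baer function on a group. -/
def BaerFunction.app (f : BaerFunction) (J : Type) [inst : Group J] : GroupClass :=
  f J inst

/-- The value of a Baer function on the section `H/K`. -/
def BaerFunction.atSection (f : BaerFunction) {G : Type} [Group G] (H K : Subgroup G)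
    [K.Normal] : GroupClass :=
  f.app (↥H ⧸ K.subgroupOf H)

/-- `D` is a direct product of (finitely many, at least one) copies of `J`. -/
def IsDirectPowerOf (D : Type) [Group D] (J : Type) [Group J] : Prop :=
  ∃ n : ℕ, 0 < n ∧ Nonempty (D ≃* (Fin n → J))

/-- `f` is a Baer function: its values depend only on the isomorphism class, its value on a
direct product of copies of a simple group `J` is its value on `J` ("type `J`"), and its
value on every (finite) simple group is a (possibly empty) formation. -/
structure IsBaerFunction (f : BaerFunction) : Prop where
  iso_invariant : ∀ (J₁ : Type) [Group J₁] (J₂ : Type) [Group J₂],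
    Nonempty (J₁ ≃* J₂) → f.app J₁ = f.app J₂
  respects_type : ∀ (D : Type) [Group D] (J : Type) [Group J],
    IsSimpleGroup J → IsDirectPowerOf D J → f.app D = f.app J
  formation_valued : ∀ (J : Type) [Group J] [Finite J], IsSimpleGroup J →
    IsFormation (f.app J)

/-- `𝔉` is the Baer-local formation defined by the Baer function `f`:
`𝔉 = {G ∣ G/C_G(H/K) ∈ f(H/K) for every chief factor H/K of G}`. -/
def DefinedByBaerFunction (𝔉 : GroupClass) (f : BaerFunction) : Prop :=
  ∀ (G : Type) [Group G] [Finite G],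
    𝔉.In G ↔
      ∀ (H K : Subgroup G) [H.Normal] [K.Normal], IsChiefFactor H K →
        haveI : (sectionCentralizer H K).Normal := sectionCentralizer_normal H K
        (f.atSection H K).In (G ⧸ sectionCentralizer H K)

/-- `E𝔉` : the class of all groups possessing a normal series all of whose factors
belong to `𝔉`. -/
def EClass (𝔉 : GroupClass) : GroupClass := fun G iG =>
  haveI := iG
  ∃ (m : ℕ) (c : Fin (m + 1) → Subgroup G),
    c 0 = ⊥ ∧ c (Fin.last m) = ⊤ ∧
    ∀ i : Fin m, c i.castSucc ≤ c i.succ ∧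
      ∃ _ : ((c i.castSucc).subgroupOf (c i.succ)).Normal,
        𝔉.In (↥(c i.succ) ⧸ (c i.castSucc).subgroupOf (c i.succ))

/-- The image of a subgroup `A` in `G/K` is isomorphic to `A/(K ∩ A)`. -/
noncomputable def mapQuotEquiv {G : Type} [Group G] (K A : Subgroup G) [K.Normal] :
    (↥A ⧸ K.subgroupOf A) ≃* ↥(A.map (QuotientGroup.mk' K)) := by
  have hker : ((QuotientGroup.mk' K).comp A.subtype).ker = K.subgroupOf A := by
    ext x; simp [MonoidHom.mem_ker, QuotientGroup.eq_one_iff, Subgroup.mem_subgroupOf]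
  have hrange : ((QuotientGroup.mk' K).comp A.subtype).range = A.map (QuotientGroup.mk' K) := by
    rw [MonoidHom.range_comp, Subgroup.range_subtype]
  exact (QuotientGroup.quotientMulEquivOfEq hker.symm).trans
    ((QuotientGroup.quotientKerEquivRange _).trans (MulEquiv.subgroupCongr hrange))

/-- Let `𝔉` be a Fitting formation and `H/K` a chief factor of the finite
group `G` with `H/K ∉ 𝔉`.  Then the `𝔉`-radical `R = G_𝔉` satisfies `R ≤ C_G(H/K)`;
indeed `HR/K` is the internal direct product of `H/K` and `RK/K`. -/
theorem statement_2 (𝔉 : GroupClass) (h𝔉 : IsFittingFormation 𝔉)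
    {G : Type} [Group G] [Finite G]
    (H K : Subgroup G) [hH : H.Normal] [hK : K.Normal] (hcf : IsChiefFactor H K)
    (hnot : ¬ 𝔉.InSect H K)
    (R : Subgroup G) (hR : 𝔉.IsRadical R) :
    R ≤ sectionCentralizer H K ∧
    H.map (QuotientGroup.mk' K) ⊓ R.map (QuotientGroup.mk' K) = ⊥ ∧
    H.map (QuotientGroup.mk' K) ⊔ R.map (QuotientGroup.mk' K)
      = (H ⊔ R).map (QuotientGroup.mk' K) ∧
    ∀ x ∈ H.map (QuotientGroup.mk' K), ∀ y ∈ R.map (QuotientGroup.mk' K),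
      Commute x y := by
  obtain ⟨⟨hiso, hquot, _⟩, ⟨_, hnorm, _⟩⟩ := h𝔉
  obtain ⟨hRn, hRin, _⟩ := hR
  haveI := hRn
  set mk : G →* G ⧸ K := QuotientGroup.mk' K with hmk
  have hone : ∀ g : G, mk g = 1 ↔ g ∈ K := fun g => by
    rw [← MonoidHom.mem_ker, hmk, QuotientGroup.ker_mk']
  -- Key step: H ⊓ (K ⊔ R) = K
  have key : H ⊓ (K ⊔ R) = K := by
    haveI : (H ⊓ (K ⊔ R)).Normal := inferInstance
    rcases hcf.2 (H ⊓ (K ⊔ R)) this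
        (le_inf hcf.1.le le_sup_left) inf_le_left with h1 | h1
    · exact h1
    · -- then H ≤ K ⊔ R, contradiction
      exfalso
      have hHle : H ≤ K ⊔ R := h1 ▸ inf_le_right
      -- R.map mk ∈ 𝔉
      have hRbar : 𝔉.In ↥(R.map mk) :=
        hiso _ _ ⟨mapQuotEquiv K R⟩ (hquot (↥R) (K.subgroupOf R) hRin)
      -- H.map mk ≤ R.map mk
      have hKmap : K.map mk = ⊥ := by
        rw [eq_bot_iff]
        rintro x ⟨k, hk, rfl⟩
        simpa [Subgroup.mem_bot] using (hone k).2 hk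
      have hle : H.map mk ≤ R.map mk := by
        calc H.map mk ≤ (K ⊔ R).map mk := Subgroup.map_mono hHle
          _ = K.map mk ⊔ R.map mk := Subgroup.map_sup _ _ _
          _ = R.map mk := by rw [hKmap, bot_sup_eq]
      haveI hHbarN : (H.map mk).Normal := hH.map mk (QuotientGroup.mk'_surjective K)
      haveI : ((H.map mk).subgroupOf (R.map mk)).Normal := inferInstance
      have hmem : 𝔉.In ↥((H.map mk).subgroupOf (R.map mk)) :=
        hnorm (↥(R.map mk)) _ this hRbar
      have hHbar : 𝔉.In ↥(H.map mk) :=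
        hiso _ _ ⟨Subgroup.subgroupOfEquivOfLe hle⟩ hmem
      exact hnot (hiso _ _ ⟨(mapQuotEquiv K H).symm⟩ hHbar)
  -- Part 1: R centralizes H/K
  have hcent : R ≤ sectionCentralizer H K := by
    intro r hr
    rw [mem_sectionCentralizer_iff]
    intro h hh
    have h1 : ⁅r, h⁆ ∈ H := by
      have e : ⁅r, h⁆ = (r * h * r⁻¹) * h⁻¹ := by group
      rw [e]; exact mul_mem (hH.conj_mem h hh r) (inv_mem hh)
    have h2 : ⁅r, h⁆ ∈ R := by
      have e : ⁅r, h⁆ = r * (h * r⁻¹ * h⁻¹) := by group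
      rw [e]; exact mul_mem hr (hRn.conj_mem r⁻¹ (inv_mem hr) h)
    have : ⁅r, h⁆ ∈ H ⊓ (K ⊔ R) := ⟨h1, Subgroup.mem_sup_right h2⟩
    rwa [key] at this
  refine ⟨hcent, ?_, (Subgroup.map_sup _ _ _).symm, ?_⟩
  · -- trivial intersection
    rw [eq_bot_iff]
    rintro x ⟨⟨h, hh, rfl⟩, r, hr, hxr⟩
    have : h * r⁻¹ ∈ K := by
      rw [← hone]
      have : mk (h * r⁻¹) = mk h * (mk r)⁻¹ := by simp
      rw [this, ← hxr, mul_inv_cancel]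
    have hhK : h ∈ K := by
      have : h ∈ H ⊓ (K ⊔ R) :=
        ⟨hh, by
          have : h = (h * r⁻¹) * r := by group
          rw [this]
          exact mul_mem (Subgroup.mem_sup_left ‹h * r⁻¹ ∈ K›) (Subgroup.mem_sup_right hr)⟩
      rwa [key] at this
    simpa [Subgroup.mem_bot] using (hone h).2 hhK
  · -- commuting
    rintro x ⟨h, hh, rfl⟩ y ⟨r, hr, rfl⟩
    have hKcomm : ⁅r, h⁆ ∈ K := hcent hr h hh
    have : mk ⁅r, h⁆ = 1 := (hone _).2 hKcomm
    rw [map_commutatorElement] at this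
    exact (commutatorElement_eq_one_iff_commute.1 this).symm
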